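/- Let γ̃^i_j satisfy (★) on an open set U ⊆ ℂ^N and let H_1,…,H_N : U → ℂ be nonvanishing holomorphic functions with ∂_j H_i = γ̃^i_j H_i for all j ≠ i and ∂_i H_i = −(Σ_{k≠i} γ̃^i_k) H_i. Then the rotation coefficients γ^i_j := H_i γ̃^i_j H_j^{−1} (i ≠ j) satisfy the Darboux–Egoroff system: ∂_k γ^i_j = γ^i_k γ^k_j for pairwise distinct i,j,k and Σ_{k=1}^N ∂_k γ^i_j = 0 for all i ≠ j; moreover ∂_j H_i = γ^i_j H_j for j ≠ i and ∂_i H_i = −Σ_{k≠i} γ^i_k H_k. -/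

import Mathlib

noncomputable section

variable {N : ℕ}

/-- The partial derivative `∂_k = ∂/∂u^k` of a function of `N` complex variables. -/
def pder (k : Fin N) (f : (Fin N → ℂ) → ℂ) : (Fin N → ℂ) → ℂ :=
  fun u => fderiv ℂ f u (Pi.single k 1)

/-- Kronecker delta. -/
def kron (i j : Fin N) : ℂ := if i = j then 1 else 0

/-- The system (★) for the functions `γ̃^i_j` (`i ≠ j`) on `U`. -/
def StarSystem (U : Set (Fin N → ℂ)) (γ : Fin N → Fin N → (Fin N → ℂ) → ℂ) : Prop :=
  (∀ i j k : Fin N, i ≠ j → j ≠ k → i ≠ k → ∀ u ∈ U,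
      pder k (γ i j) u =
        -(γ i j u * γ i k u) + γ i j u * γ j k u + γ i k u * γ k j u) ∧
  (∀ i j : Fin N, i ≠ j → ∀ u ∈ U, ∑ k, pder k (γ i j) u = 0)

/-- Christoffel symbols `Γ^i_{jk}` of the flat F-manifold connection in canonical coordinates,
associated to a solution `γ̃` of (★):  `Γ^i_{jk} = 0` for pairwise distinct `i,j,k`;
`Γ^i_{ij} = Γ^i_{ji} = γ̃^i_j` and `Γ^i_{jj} = −γ̃^i_j` for `i ≠ j`;
`Γ^i_{ii} = −Σ_{k≠i} γ̃^i_k`. -/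
def Gam (γ : Fin N → Fin N → (Fin N → ℂ) → ℂ) (i j k : Fin N) : (Fin N → ℂ) → ℂ :=
  if i = j ∧ i = k then fun u => -∑ l ∈ Finset.univ.erase i, γ i l u
  else if i = j then γ i k
  else if i = k then γ i j
  else if j = k then fun u => -(γ i j u)
  else 0


lemma pder_abc {N : ℕ} (a b c : (Fin N → ℂ) → ℂ) (k : Fin N) (u : Fin N → ℂ)
    (ha : DifferentiableAt ℂ a u) (hb : DifferentiableAt ℂ b u)
    (hc : DifferentiableAt ℂ c u) (hcu : c u ≠ 0) :
    pder k (fun w => a w * b w / c w) u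
      = ((pder k a u * b u + a u * pder k b u) * c u - a u * b u * pder k c u) / (c u)^2 := by
  have h1 : HasFDerivAt (fun w => a w * b w / c w)
      ((a u * b u) • ((-ContinuousLinearMap.mulLeftRight ℂ ℂ (c u)⁻¹ (c u)⁻¹).comp (fderiv ℂ c u))
        + (c u)⁻¹ • (a u • fderiv ℂ b u + b u • fderiv ℂ a u)) u := by
    simpa [div_eq_mul_inv, Function.comp_def, Pi.mul_def] using
      (ha.hasFDerivAt.mul hb.hasFDerivAt).mul ((hasFDerivAt_inv' hcu).comp u hc.hasFDerivAt)
  unfold pder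
  rw [h1.fderiv]
  simp only [ContinuousLinearMap.add_apply, ContinuousLinearMap.smul_apply,
    ContinuousLinearMap.comp_apply, ContinuousLinearMap.neg_apply,
    ContinuousLinearMap.mulLeftRight_apply, smul_eq_mul]
  field_simp
  ring

/-- If `γ̃` solves (★) on `U` and the nonvanishing holomorphic functions
`H_i` satisfy `∂_j H_i = γ̃^i_j H_i` (`j ≠ i`) and `∂_i H_i = −(Σ_{k≠i} γ̃^i_k) H_i`, then the
rotation coefficients `γ^i_j := H_i γ̃^i_j H_j^{−1}` satisfy the Darboux–Egoroff system, and
moreover `∂_j H_i = γ^i_j H_j` for `j ≠ i` and `∂_i H_i = −Σ_{k≠i} γ^i_k H_k`. -/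
theorem statement12 {N : ℕ} (hN : 2 ≤ N) (U : Set (Fin N → ℂ)) (hU : IsOpen U)
    (γ : Fin N → Fin N → (Fin N → ℂ) → ℂ)
    (hhol : ∀ i j : Fin N, i ≠ j → DifferentiableOn ℂ (γ i j) U)
    (hstar : StarSystem U γ)
    (H : Fin N → (Fin N → ℂ) → ℂ)
    (hHhol : ∀ i : Fin N, DifferentiableOn ℂ (H i) U)
    (hHne : ∀ i : Fin N, ∀ u ∈ U, H i u ≠ 0)
    (hHoff : ∀ i j : Fin N, j ≠ i → ∀ u ∈ U, pder j (H i) u = γ i j u * H i u)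
    (hHdiag : ∀ i : Fin N, ∀ u ∈ U,
        pder i (H i) u = -(∑ k ∈ Finset.univ.erase i, γ i k u) * H i u) :
    -- Darboux–Egoroff system for the rotation coefficients γ^i_j = H_i γ̃^i_j H_j^{−1}
    (∀ i j k : Fin N, i ≠ j → j ≠ k → i ≠ k → ∀ u ∈ U,
        pder k (fun w => H i w * γ i j w / H j w) u
          = (H i u * γ i k u / H k u) * (H k u * γ k j u / H j u)) ∧
    (∀ i j : Fin N, i ≠ j → ∀ u ∈ U,
        ∑ k, pder k (fun w => H i w * γ i j w / H j w) u = 0) ∧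
    -- the system for H in terms of the rotation coefficients
    (∀ i j : Fin N, j ≠ i → ∀ u ∈ U,
        pder j (H i) u = (H i u * γ i j u / H j u) * H j u) ∧
    (∀ i : Fin N, ∀ u ∈ U,
        pder i (H i) u = -∑ k ∈ Finset.univ.erase i, (H i u * γ i k u / H k u) * H k u) := by
  have sumH : ∀ i : Fin N, ∀ u ∈ U, ∑ k, pder k (H i) u = 0 := by
    intro i u hu
    rw [← Finset.add_sum_erase _ _ (Finset.mem_univ i), hHdiag i u hu,
      Finset.sum_congr rfl (fun k hk => hHoff i k (Finset.ne_of_mem_erase hk) u hu),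
      ← Finset.sum_mul]
    ring
  have diffAt : ∀ (f : (Fin N → ℂ) → ℂ), DifferentiableOn ℂ f U → ∀ u ∈ U,
      DifferentiableAt ℂ f u := fun f hf u hu => (hf u hu).differentiableAt (hU.mem_nhds hu)
  refine ⟨?_, ?_, ?_, ?_⟩
  · intro i j k hij hjk hik u hu
    rw [pder_abc _ _ _ _ _ (diffAt _ (hHhol i) u hu) (diffAt _ (hhol i j hij) u hu)
        (diffAt _ (hHhol j) u hu) (hHne j u hu),
      hHoff i k (Ne.symm hik) u hu, hHoff j k (Ne.symm hjk) u hu,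
      hstar.1 i j k hij hjk hik u hu]
    field_simp [hHne j u hu, hHne k u hu]
    ring
  · intro i j hij u hu
    have hrw : ∀ k : Fin N, pder k (fun w => H i w * γ i j w / H j w) u
        = (pder k (H i) u * (γ i j u * H j u) + pder k (γ i j) u * (H i u * H j u)
            - pder k (H j) u * (H i u * γ i j u)) / (H j u)^2 := by
      intro k
      rw [pder_abc _ _ _ _ _ (diffAt _ (hHhol i) u hu) (diffAt _ (hhol i j hij) u hu)
        (diffAt _ (hHhol j) u hu) (hHne j u hu)]
      ring
    rw [Finset.sum_congr rfl (fun k _ => hrw k), ← Finset.sum_div, Finset.sum_sub_distrib,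
      Finset.sum_add_distrib, ← Finset.sum_mul, ← Finset.sum_mul, ← Finset.sum_mul,
      sumH i u hu, sumH j u hu, hstar.2 i j hij u hu]
    simp
  · intro i j hji u hu
    rw [hHoff i j hji u hu]
    field_simp [hHne j u hu]
  · intro i u hu
    have hterm : ∀ k ∈ Finset.univ.erase i, (H i u * γ i k u / H k u) * H k u
        = γ i k u * H i u := by
      intro k hk
      field_simp [hHne k u hu]
    rw [hHdiag i u hu, Finset.sum_congr rfl hterm, ← Finset.sum_mul]
    ring


end
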